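/- Let λ be a composition of d and T a λ-tableau. The only element w of the column group col(T) such that T·w is row-equivalent to T is the identity. Consequently the coefficient c_{T,T} of the tabloid {T} in the Specht vector v_T equals 1. -/

import Mathlib

open Equiv Finset

/-! A composition `λ = (λ_1, …, λ_n)` of `d` is encoded as `lam : Fin n → ℕ` (with, in the
theorems, the hypotheses `∀ i, 0 < lam i` and `∑ i, lam i = d`).  Enumerating the cells of the
Young diagram `[λ]` in row-reading order identifies them with `Fin d`: the cell `(i, j)` (with
`0 ≤ j < λ_i`, 0-indexed) corresponds to `psum lam i + j` where `psum lam i = λ_0 + ⋯ + λ_{i-1}`.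
A `λ`-tableau `T : [λ] → {1, …, d}` is thus encoded as a permutation `T : Perm (Fin d)`, with
`T k` the entry of the `k`-th cell; under this identification `T` itself is its own
row-reading word `w_T`. -/

/-- Partial sum `λ_0 + ⋯ + λ_{i-1}` of a composition. -/
def psum (n : ℕ) (lam : Fin n → ℕ) (i : Fin n) : ℕ :=
  ∑ j ∈ Finset.univ.filter (fun j : Fin n => j < i), lam j

/-- The cells (in row-reading coordinates) of the `i`-th row of the Young diagram of `lam`. -/
def rowCells (n d : ℕ) (lam : Fin n → ℕ) (i : Fin n) : Finset (Fin d) :=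
  Finset.univ.filter fun k : Fin d =>
    psum n lam i ≤ (k : ℕ) ∧ (k : ℕ) < psum n lam i + lam i

/-- The cells (in row-reading coordinates) of the `j`-th column of the Young diagram of `lam`. -/
def colCells (n d : ℕ) (lam : Fin n → ℕ) (j : ℕ) : Finset (Fin d) :=
  Finset.univ.filter fun k : Fin d => ∃ i : Fin n, (k : ℕ) = psum n lam i + j ∧ j < lam i

/-- A tableau is row standard if its entries increase along each row. -/
def RowStandard (n d : ℕ) (lam : Fin n → ℕ) (T : Perm (Fin d)) : Prop :=
  ∀ i : Fin n, ∀ k ∈ rowCells n d lam i, ∀ k' ∈ rowCells n d lam i, k < k' → T k < T k'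

/-- A tableau is standard if its entries increase along each row and down each column. -/
def Standard (n d : ℕ) (lam : Fin n → ℕ) (T : Perm (Fin d)) : Prop :=
  RowStandard n d lam T ∧
    ∀ i i' : Fin n, ∀ j : ℕ, ∀ k k' : Fin d,
      (k : ℕ) = psum n lam i + j → (k' : ℕ) = psum n lam i' + j →
      j < lam i → j < lam i' → i < i' → T k < T k'

/-- Two tableaux are row-equivalent if corresponding rows have equal entry sets. -/
def RowEquiv (n d : ℕ) (lam : Fin n → ℕ) (T T' : Perm (Fin d)) : Prop :=
  ∀ i : Fin n, (rowCells n d lam i).image T = (rowCells n d lam i).image T'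

/-- Row-equivalence as a setoid on tableaux. -/
def rowSetoid (n d : ℕ) (lam : Fin n → ℕ) : Setoid (Perm (Fin d)) :=
  ⟨RowEquiv n d lam,
    fun _ _ => rfl,
    fun h i => (h i).symm,
    fun h h' i => (h i).trans (h' i)⟩

/-- A tabloid is a row-equivalence class of tableaux. -/
def Tabloid (n d : ℕ) (lam : Fin n → ℕ) : Type :=
  Quotient (rowSetoid n d lam)

/-- The right action of `w ∈ Σ_d` on tableaux, `(T·w)(c) = w⁻¹(T(c))`. -/
def tabAct (d : ℕ) (T : Perm (Fin d)) (w : Perm (Fin d)) : Perm (Fin d) :=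
  w⁻¹ * T

/-- The column group `col(T)`: permutations of the entries preserving the entry set of each
column of `T`. -/
def colGroup (n d : ℕ) (lam : Fin n → ℕ) (T : Perm (Fin d)) : Set (Perm (Fin d)) :=
  {w | ∀ j : ℕ, ((colCells n d lam j).image T).image w = (colCells n d lam j).image T}

open scoped Classical in
/-- The Specht vector `v_T = ∑_{w ∈ col(T)} sgn(w) · {T·w}` in the free `ℤ`-module on
tabloids. -/
noncomputable def spechtVector (n d : ℕ) (lam : Fin n → ℕ) (T : Perm (Fin d)) :
    Tabloid n d lam →₀ ℤ :=
  ∑ w ∈ Finset.univ.filter (fun w => w ∈ colGroup n d lam T),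
    (Perm.sign w : ℤ) • Finsupp.single (Quotient.mk (rowSetoid n d lam) (tabAct d T w)) 1

/-- The length of a permutation: its number of inversions. -/
def invLength (d : ℕ) (w : Perm (Fin d)) : ℕ :=
  (Finset.univ.filter fun p : Fin d × Fin d => p.1 < p.2 ∧ w p.2 < w p.1).card

/-- The Bruhat order on `Σ_d`: `u ≤ w` iff `u` is obtained from `w` by repeatedly multiplying
by transpositions, decreasing the length at each step. -/
def BruhatLE (d : ℕ) (u w : Perm (Fin d)) : Prop :=
  Relation.ReflTransGen
    (fun x y => (∃ a b : Fin d, a ≠ b ∧ y = x * Equiv.swap a b) ∧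
      invLength d y < invLength d x) w u

/-- The Young subgroup `W_λ ≤ Σ_d`: permutations stabilizing each consecutive block
`B_i = {λ_0 + ⋯ + λ_{i-1}, …, λ_0 + ⋯ + λ_i - 1}` (0-indexed). -/
def youngSubgroup (n d : ℕ) (lam : Fin n → ℕ) : Subgroup (Perm (Fin d)) where
  carrier := {w | ∀ (i : Fin n) (k : Fin d), k ∈ rowCells n d lam i ↔ w k ∈ rowCells n d lam i}
  one_mem' := by intro i k; simp
  mul_mem' := by
    intro a b ha hb i k
    exact (hb i k).trans (ha i (b k))
  inv_mem' := by
    intro a ha i k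
    have := (ha i (a⁻¹ k)).symm
    simpa using this

lemma psum_add_le (n : ℕ) (lam : Fin n → ℕ) {i i' : Fin n} (h : i < i') :
    psum n lam i + lam i ≤ psum n lam i' := by
  have hsub : insert i (Finset.univ.filter (fun j : Fin n => j < i)) ⊆
      Finset.univ.filter (fun j : Fin n => j < i') := by
    intro x hx
    simp only [Finset.mem_insert, Finset.mem_filter, Finset.mem_univ, true_and] at hx ⊢
    rcases hx with rfl | hx
    · exact h
    · exact hx.trans h
  have hni : i ∉ Finset.univ.filter (fun j : Fin n => j < i) := by simp
  have key := Finset.sum_le_sum_of_subset (f := lam) hsub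
  rw [Finset.sum_insert hni] at key
  unfold psum
  omega

lemma row_unique (n d : ℕ) (lam : Fin n → ℕ) {i i' : Fin n} {k : Fin d}
    (h : k ∈ rowCells n d lam i) (h' : k ∈ rowCells n d lam i') : i = i' := by
  simp only [rowCells, Finset.mem_filter, Finset.mem_univ, true_and] at h h'
  rcases lt_trichotomy i i' with hlt | heq | hlt
  · have := psum_add_le n lam hlt; omega
  · exact heq
  · have := psum_add_le n lam hlt; omega

lemma row_exists (n d : ℕ) (lam : Fin n → ℕ) (hsum : ∑ i, lam i = d) (k : Fin d) :
    ∃ i, k ∈ rowCells n d lam i := by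
  have hd : 0 < d := k.pos
  have hn : 0 < n := by
    rcases Nat.eq_zero_or_pos n with rfl | h
    · simp at hsum; omega
    · exact h
  set S := Finset.univ.filter (fun i : Fin n => psum n lam i ≤ (k : ℕ)) with hS
  have hSne : S.Nonempty := by
    refine ⟨⟨0, hn⟩, ?_⟩
    simp only [hS, Finset.mem_filter, Finset.mem_univ, true_and]
    have : Finset.univ.filter (fun j : Fin n => j < (⟨0, hn⟩ : Fin n)) = ∅ := by
      ext x; simp [Fin.lt_def]
    simp [psum, this]
  set i := S.max' hSne with hi
  have hile : psum n lam i ≤ (k : ℕ) := by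
    have := S.max'_mem hSne
    simpa [hS] using this
  refine ⟨i, ?_⟩
  simp only [rowCells, Finset.mem_filter, Finset.mem_univ, true_and]
  refine ⟨hile, ?_⟩
  by_contra hcon
  push_neg at hcon
  by_cases htop : (i : ℕ) + 1 < n
  · set i' : Fin n := ⟨(i : ℕ) + 1, htop⟩ with hi'
    have hfilt : Finset.univ.filter (fun j : Fin n => j < i') =
        insert i (Finset.univ.filter (fun j : Fin n => j < i)) := by
      ext x
      simp only [Finset.mem_filter, Finset.mem_univ, true_and, Finset.mem_insert, Fin.lt_def]
      constructor
      · intro hx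
        have : (x : ℕ) ≤ (i : ℕ) := by simp [hi'] at hx; omega
        rcases Nat.lt_or_ge (x : ℕ) (i : ℕ) with h | h
        · exact Or.inr h
        · left; exact Fin.ext (by omega)
      · rintro (rfl | hx)
        · show (i:ℕ) < (i:ℕ)+1; omega
        · show (x:ℕ) < (i:ℕ)+1; omega
    have hpsum' : psum n lam i' = psum n lam i + lam i := by
      unfold psum
      rw [hfilt, Finset.sum_insert (by simp)]
      ring
    have : i' ∈ S := by
      simp only [hS, Finset.mem_filter, Finset.mem_univ, true_and, hpsum']
      omega
    have := S.le_max' i' this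
    rw [← hi] at this
    have : (i' : ℕ) ≤ (i : ℕ) := this
    simp [hi'] at this
  · have htop' : (i : ℕ) + 1 = n := by omega
    have hfilt : Finset.univ = insert i (Finset.univ.filter (fun j : Fin n => j < i)) := by
      ext x
      simp only [Finset.mem_univ, Finset.mem_insert, Finset.mem_filter, true_and, Fin.lt_def,
        true_iff]
      rcases Nat.lt_or_ge (x : ℕ) (i : ℕ) with h | h
      · exact Or.inr h
      · left; exact Fin.ext (by omega)
    have : d = psum n lam i + lam i := by
      rw [← hsum, hfilt, Finset.sum_insert (by simp)]
      unfold psum; ring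
    omega

/-- for a composition `λ` of `d` and a `λ`-tableau `T`, the only element `w` of
the column group `col(T)` such that `T·w` is row-equivalent to `T` is the identity;
consequently the coefficient `c_{T,T}` of the tabloid `{T}` in the Specht vector `v_T`
equals `1`. -/
theorem column_group_row_equivalent_only_identity_and_diagonal_coefficient_one
    (n d : ℕ) (lam : Fin n → ℕ) (hpos : ∀ i, 0 < lam i) (hsum : ∑ i, lam i = d)
    (T : Perm (Fin d)) :
    (∀ w ∈ colGroup n d lam T, RowEquiv n d lam (tabAct d T w) T → w = 1) ∧
      spechtVector n d lam T (Quotient.mk (rowSetoid n d lam) T) = 1 := by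
  classical
  have hmain : ∀ w ∈ colGroup n d lam T, RowEquiv n d lam (tabAct d T w) T → w = 1 := by
    intro w hw hrow
    have hfix : ∀ k : Fin d, w⁻¹ (T k) = T k := by
      intro k
      obtain ⟨i, hki⟩ := row_exists n d lam hsum k
      have hki' := hki
      simp only [rowCells, Finset.mem_filter, Finset.mem_univ, true_and] at hki'
      set j : ℕ := (k : ℕ) - psum n lam i with hj
      have hkc : k ∈ colCells n d lam j := by
        simp only [colCells, Finset.mem_filter, Finset.mem_univ, true_and]
        exact ⟨i, by omega, by omega⟩
      -- from row equivalence: w⁻¹ (T k) is a T-value on row i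
      have h1 : w⁻¹ (T k) ∈ (rowCells n d lam i).image T := by
        rw [← hrow i]
        exact Finset.mem_image.mpr ⟨k, hki, rfl⟩
      obtain ⟨k', hk'row, hk'⟩ := Finset.mem_image.mp h1
      -- from column group membership: w⁻¹ (T k) is a T-value on column j
      have h2 : w⁻¹ (T k) ∈ (colCells n d lam j).image T := by
        have hTk : T k ∈ (colCells n d lam j).image T := Finset.mem_image.mpr ⟨k, hkc, rfl⟩
        rw [← hw j] at hTk
        obtain ⟨z, hz, hzeq⟩ := Finset.mem_image.mp hTk
        have : w⁻¹ (T k) = z := by rw [← hzeq]; simp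
        rwa [this]
      obtain ⟨k'', hk''col, hk''⟩ := Finset.mem_image.mp h2
      have hkk : k'' = k' := T.injective (by rw [hk', hk''])
      subst hkk
      -- k'' lies in row i and column j, hence equals k
      simp only [colCells, Finset.mem_filter, Finset.mem_univ, true_and] at hk''col
      obtain ⟨i'', hval, hjlt⟩ := hk''col
      have hrow'' : k'' ∈ rowCells n d lam i'' := by
        simp only [rowCells, Finset.mem_filter, Finset.mem_univ, true_and]
        omega
      have hii : i'' = i := row_unique n d lam hrow'' hk'row
      subst hii
      have hkeq : k'' = k := by
        simp only [rowCells, Finset.mem_filter, Finset.mem_univ, true_and] at hk'row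
        exact Fin.ext (by omega)
      rw [← hk'', hkeq]
    ext x
    have := hfix (T⁻¹ x)
    simp only [Equiv.apply_symm_apply, Perm.inv_def] at this
    have h := congrArg w this
    simp only [Perm.inv_def, Equiv.apply_symm_apply] at h
    exact congrArg Fin.val h.symm
  refine ⟨hmain, ?_⟩
  have hone : (1 : Perm (Fin d)) ∈ colGroup n d lam T := by
    intro j
    have : ⇑(1 : Perm (Fin d)) = id := rfl
    rw [this, Finset.image_id]
  show (∑ w ∈ Finset.univ.filter (fun w => w ∈ colGroup n d lam T),
    ((Perm.sign w : ℤ) • Finsupp.single (Quotient.mk (rowSetoid n d lam) (tabAct d T w)) 1 :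
      Quotient (rowSetoid n d lam) →₀ ℤ)) (Quotient.mk (rowSetoid n d lam) T) = 1
  rw [Finsupp.finset_sum_apply]
  rw [Finset.sum_eq_single_of_mem (1 : Perm (Fin d))
    (Finset.mem_filter.mpr ⟨Finset.mem_univ _, hone⟩)]
  · have hT1 : tabAct d T 1 = T := by simp [tabAct]
    simp [hT1, Finsupp.single_apply]
  · intro b hb hb1
    have hbcol : b ∈ colGroup n d lam T := (Finset.mem_filter.mp hb).2
    have hne : Quotient.mk (rowSetoid n d lam) (tabAct d T b) ≠
        Quotient.mk (rowSetoid n d lam) T := by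
      intro heq
      exact hb1 (hmain b hbcol (Quotient.exact heq))
    simp [Finsupp.single_apply, hne]
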